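/- Let σ be a subgroup of ℤ and let κ_{c₁,c₂}, ξ_{c₁,c₂} ⊆ ℤ for c₁,c₂ ∈ {∘,•} satisfy all of the following for all c₁,c₂,c₃ ∈ {∘,•} and ω ∈ {κ, ξ}: (ii) ω_{c₁,c₂} + σ ⊆ ω_{c₁,c₂}; (iii) ω_{c₁,c₂} ⊆ −ω_{c̄₂,c̄₁}; (iv) ω_{c₁,c₂} ⊆ −ω_{c₂,c₁} + σ; (v) ξ_{c₁,c₂} ⊆ ξ_{c₁,c̄₂} ∪ (−ξ_{c₂,c̄₁} + σ); (vi) 0 ∈ κ_{∘•} ∩ κ_{•∘}; (vii) κ_{c₁,c₂} + κ_{c̄₂,c₃} ⊆ κ_{c₁,c₃}; (viii) κ_{c₁,c₂} + ξ_{c̄₂,c₃} ⊆ ξ_{c₁,c₃}. Then κ_{∘∘} = κ_{••} =: λ, κ_{∘•} = κ_{•∘} =: κ, ξ_{∘∘} = ξ_{••} = ξ_{∘•} = ξ_{•∘} =: ξ, and there exist u ∈ ℕ ∪ {0}, m ∈ ℕ, D ⊆ {0} ∪ {1,…,⌊m/2⌋}, and E ⊆ {0} ∪ ℕ such that (σ,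 λ, κ, ξ) equals one of: (umℤ, mℤ, mℤ, ℤ\D_m), (2umℤ, m+2mℤ, 2mℤ, ℤ\D_m), (umℤ, ∅, mℤ, ℤ\D_m), ({0}, {0}, {0}, ℤ\E₀), ({0}, ∅, {0}, ℤ\E₀). -/

import Mathlib

open Pointwise

/-- The set of integer multiples of `m`. -/
def zMul (m : ℤ) : Set ℤ := {x | ∃ n : ℤ, x = m * n}

/-- The coset `l + mℤ`. -/
def zCoset (l m : ℤ) : Set ℤ := {x | ∃ n : ℤ, x = l + m * n}

/-- `D_m = (D ∪ (m - D)) + mℤ`. -/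
def dmSet (m : ℤ) (D : Set ℤ) : Set ℤ :=
  {x | ∃ a ∈ D ∪ (fun s => m - s) '' D, ∃ n : ℤ, x = a + m * n}

lemma exists_zMul (S : Set ℤ) (h0 : (0:ℤ) ∈ S)
    (hadd : ∀ a b : ℤ, a ∈ S → b ∈ S → a + b ∈ S)
    (hneg : ∀ a : ℤ, a ∈ S → -a ∈ S) : ∃ m : ℤ, 0 ≤ m ∧ S = zMul m := by
  let H : AddSubgroup ℤ :=
    { carrier := S
      add_mem' := fun ha hb => hadd _ _ ha hb
      zero_mem' := h0
      neg_mem' := fun ha => hneg _ ha }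
  obtain ⟨a, ha⟩ := Int.subgroup_cyclic H
  refine ⟨|a|, abs_nonneg a, ?_⟩
  ext x
  have hx : x ∈ S ↔ ∃ n : ℤ, x = a * n := by
    rw [show (x ∈ S) = (x ∈ H) from rfl, ha, AddSubgroup.mem_closure_singleton]
    constructor
    · rintro ⟨n, rfl⟩; exact ⟨n, by rw [smul_eq_mul]; ring⟩
    · rintro ⟨n, rfl⟩; exact ⟨n, by rw [smul_eq_mul]; ring⟩
  rw [hx]
  constructor
  · rintro ⟨n, rfl⟩
    rcases abs_cases a with ⟨h1, _⟩ | ⟨h1, _⟩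
    · exact ⟨n, by rw [h1]⟩
    · exact ⟨-n, by rw [h1]; ring⟩
  · rintro ⟨n, rfl⟩
    rcases abs_cases a with ⟨h1, _⟩ | ⟨h1, _⟩
    · exact ⟨n, by rw [h1]⟩
    · exact ⟨-n, by rw [h1]; ring⟩

lemma exists_dmSet (m : ℤ) (hm : 1 ≤ m) (C : Set ℤ)
    (htrans : ∀ c ∈ C, ∀ n : ℤ, c + m * n ∈ C)
    (hneg : ∀ c ∈ C, -c ∈ C) :
    ∃ D : Set ℤ, D ⊆ {0} ∪ Set.Icc 1 (m/2) ∧ dmSet m D = C := by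
  refine ⟨C ∩ Set.Icc 0 (m/2), ?_, ?_⟩
  · rintro x ⟨-, hx0, hx2⟩
    rcases eq_or_lt_of_le hx0 with h | h
    · exact Or.inl h.symm
    · exact Or.inr ⟨h, hx2⟩
  · ext x
    constructor
    · rintro ⟨a, ha, n, rfl⟩
      rcases ha with ⟨haC, -⟩ | ⟨d, ⟨hdC, -⟩, rfl⟩
      · exact htrans _ haC n
      · show (m - d) + m * n ∈ C
        have : (m - d) + m * n = -d + m * (1 + n) := by ring
        rw [this]
        exact htrans _ (hneg _ hdC) _
    · intro hx
      have key := Int.emod_add_mul_ediv x m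
      have hr : x % m ∈ C := by
        have : x % m = x + m * (-(x / m)) := by linarith [mul_neg m (x/m)]
        rw [this]; exact htrans _ hx _
      by_cases hcase : x % m ≤ m / 2
      · exact ⟨x % m, Or.inl ⟨hr, Int.emod_nonneg x (by omega), hcase⟩, x / m,
          by linarith⟩
      · refine ⟨m - (m - x % m), Or.inr ⟨m - x % m, ⟨?_, ?_, ?_⟩, rfl⟩, x / m, ?_⟩
        · have : m - x % m = -(x % m) + m * 1 := by ring
          rw [this]; exact htrans _ (hneg _ hr) 1
        · have := Int.emod_lt_of_pos x (show 0 < m by omega); omega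
        · have := Int.emod_nonneg x (show m ≠ 0 by omega); omega
        · have : m - (m - x % m) = x % m := by ring
          rw [this]; linarith

theorem stmt15 (σ : AddSubgroup ℤ) (κ ξ : Bool → Bool → Set ℤ)
    (hκ2 : ∀ c1 c2, κ c1 c2 + (σ : Set ℤ) ⊆ κ c1 c2)
    (hκ3 : ∀ c1 c2, κ c1 c2 ⊆ -(κ (!c2) (!c1)))
    (hκ4 : ∀ c1 c2, κ c1 c2 ⊆ -(κ c2 c1) + (σ : Set ℤ))
    (hξ2 : ∀ c1 c2, ξ c1 c2 + (σ : Set ℤ) ⊆ ξ c1 c2)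
    (hξ3 : ∀ c1 c2, ξ c1 c2 ⊆ -(ξ (!c2) (!c1)))
    (hξ4 : ∀ c1 c2, ξ c1 c2 ⊆ -(ξ c2 c1) + (σ : Set ℤ))
    (h5 : ∀ c1 c2, ξ c1 c2 ⊆ ξ c1 (!c2) ∪ (-(ξ c2 (!c1)) + (σ : Set ℤ)))
    (h6 : (0 : ℤ) ∈ κ true false ∩ κ false true)
    (h7 : ∀ c1 c2 c3, κ c1 c2 + κ (!c2) c3 ⊆ κ c1 c3)
    (h8 : ∀ c1 c2 c3, κ c1 c2 + ξ (!c2) c3 ⊆ ξ c1 c3) :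
    κ true true = κ false false ∧ κ true false = κ false true ∧
    ξ true true = ξ false false ∧ ξ true true = ξ true false ∧
    ξ true true = ξ false true ∧
    ∃ u m : ℤ, 0 ≤ u ∧ 1 ≤ m ∧
      ∃ D E : Set ℤ, D ⊆ {0} ∪ Set.Icc 1 (m / 2) ∧ E ⊆ {0} ∪ {x : ℤ | 0 < x} ∧
        (((σ : Set ℤ) = zMul (u * m) ∧ κ true true = zMul m ∧
            κ true false = zMul m ∧ ξ true true = (dmSet m D)ᶜ) ∨
         ((σ : Set ℤ) = zMul (2 * u * m) ∧ κ true true = zCoset m (2 * m) ∧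
            κ true false = zMul (2 * m) ∧ ξ true true = (dmSet m D)ᶜ) ∨
         ((σ : Set ℤ) = zMul (u * m) ∧ κ true true = ∅ ∧
            κ true false = zMul m ∧ ξ true true = (dmSet m D)ᶜ) ∨
         ((σ : Set ℤ) = {0} ∧ κ true true = {0} ∧
            κ true false = {0} ∧ ξ true true = (E ∪ -E)ᶜ) ∨
         ((σ : Set ℤ) = {0} ∧ κ true true = ∅ ∧
            κ true false = {0} ∧ ξ true true = (E ∪ -E)ᶜ)) := by
  have key : ∀ (A B C : Set ℤ), A ⊆ -B + (σ : Set ℤ) → (∀ b ∈ B, -b ∈ C) →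
      (C + (σ : Set ℤ) ⊆ C) → A ⊆ C := by
    intro A B C h4 hneg h2 a ha
    rcases Set.mem_add.mp (h4 ha) with ⟨x, hx, s, hs, hxs⟩
    have hx' : -x ∈ B := Set.mem_neg.mp hx
    have hx'' : x ∈ C := by have := hneg _ hx'; rwa [neg_neg] at this
    have := h2 (Set.add_mem_add hx'' hs)
    rwa [hxs] at this
  have hKneg : ∀ a ∈ κ true false, -a ∈ κ true false :=
    fun a ha => Set.mem_neg.mp (hκ3 true false ha)
  have hK'neg : ∀ a ∈ κ false true, -a ∈ κ false true :=
    fun a ha => Set.mem_neg.mp (hκ3 false true ha)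
  have hLnegff : ∀ a ∈ κ true true, -a ∈ κ false false :=
    fun a ha => Set.mem_neg.mp (hκ3 true true ha)
  have hL'negtt : ∀ a ∈ κ false false, -a ∈ κ true true :=
    fun a ha => Set.mem_neg.mp (hκ3 false false ha)
  have hKK' : κ true false = κ false true :=
    Set.Subset.antisymm
      (key _ _ _ (hκ4 true false) hK'neg (hκ2 false true))
      (key _ _ _ (hκ4 false true) hKneg (hκ2 true false))
  have hLL' : κ true true = κ false false :=
    Set.Subset.antisymm
      (key _ _ _ (hκ4 true true) hLnegff (hκ2 false false))
      (key _ _ _ (hκ4 false false) hL'negtt (hκ2 true true))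
  have hXnegff : ∀ a ∈ ξ true true, -a ∈ ξ false false :=
    fun a ha => Set.mem_neg.mp (hξ3 true true ha)
  have hX'negtt : ∀ a ∈ ξ false false, -a ∈ ξ true true :=
    fun a ha => Set.mem_neg.mp (hξ3 false false ha)
  have hZneg : ∀ a ∈ ξ true false, -a ∈ ξ true false :=
    fun a ha => Set.mem_neg.mp (hξ3 true false ha)
  have hZ'neg : ∀ a ∈ ξ false true, -a ∈ ξ false true :=
    fun a ha => Set.mem_neg.mp (hξ3 false true ha)
  have hXX' : ξ true true = ξ false false :=
    Set.Subset.antisymm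
      (key _ _ _ (hξ4 true true) hXnegff (hξ2 false false))
      (key _ _ _ (hξ4 false false) hX'negtt (hξ2 true true))
  have hZZ' : ξ true false = ξ false true :=
    Set.Subset.antisymm
      (key _ _ _ (hξ4 true false) hZ'neg (hξ2 false true))
      (key _ _ _ (hξ4 false true) hZneg (hξ2 true false))
  have hXZ : ξ true true = ξ true false := by
    apply Set.Subset.antisymm
    · intro a ha
      rcases h5 true true ha with h | h
      · exact h
      · rcases Set.mem_add.mp h with ⟨x, hx, s, hs, hxs⟩
        have hx' : -x ∈ ξ true false := Set.mem_neg.mp hx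
        have hx'' : x ∈ ξ true false := by have := hZneg _ hx'; rwa [neg_neg] at this
        have := hξ2 true false (Set.add_mem_add hx'' hs)
        rwa [hxs] at this
    · intro a ha
      rcases h5 true false ha with h | h
      · exact h
      · rcases Set.mem_add.mp h with ⟨x, hx, s, hs, hxs⟩
        have hx' : -x ∈ ξ false false := Set.mem_neg.mp hx
        have hx'' : x ∈ ξ true true := by have := hX'negtt _ hx'; rwa [neg_neg] at this
        have := hξ2 true true (Set.add_mem_add hx'' hs)
        rwa [hxs] at this
  -- basic closure facts
  have hKadd : ∀ a b : ℤ, a ∈ κ true false → b ∈ κ true false → a + b ∈ κ true false :=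
    fun a b ha hb => h7 true false false (Set.add_mem_add ha hb)
  have hKL : ∀ k ∈ κ true false, ∀ a ∈ κ true true, k + a ∈ κ true true :=
    fun k hk a ha => h7 true false true (Set.add_mem_add hk ha)
  have hLLK : ∀ a ∈ κ true true, ∀ b ∈ κ true true, a + b ∈ κ true false := by
    intro a ha b hb
    rw [hLL'] at hb
    exact h7 true true false (Set.add_mem_add ha hb)
  have hLneg : ∀ a ∈ κ true true, -a ∈ κ true true := by
    intro a ha; rw [hLL']; exact hLnegff a ha
  have hXneg : ∀ a ∈ ξ true true, -a ∈ ξ true true := by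
    intro a ha; rw [hXX']; exact hXnegff a ha
  have hKX : ∀ k ∈ κ true false, ∀ x ∈ ξ true true, k + x ∈ ξ true true :=
    fun k hk x hx => h8 true false true (Set.add_mem_add hk hx)
  have hLX : ∀ l ∈ κ true true, ∀ x ∈ ξ true true, l + x ∈ ξ true true := by
    intro l hl x hx
    rw [hXZ, hZZ'] at hx
    exact h8 true true true (Set.add_mem_add hl hx)
  -- complement of ξ
  set C : Set ℤ := (ξ true true)ᶜ with hCdef
  have hCneg : ∀ c ∈ C, -c ∈ C := by
    intro c hc h
    exact hc (by have := hXneg _ h; rwa [neg_neg] at this)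
  have hCK : ∀ c ∈ C, ∀ k ∈ κ true false, c + k ∈ C := by
    intro c hc k hk h
    apply hc
    have := hKX (-k) (hKneg _ hk) _ h
    rwa [show -k + (c + k) = c by ring] at this
  have hCL : ∀ c ∈ C, ∀ l ∈ κ true true, c + l ∈ C := by
    intro c hc l hl h
    apply hc
    have := hLX (-l) (hLneg _ hl) _ h
    rwa [show -l + (c + l) = c by ring] at this
  -- K is a subgroup
  obtain ⟨M, hM0, hKM⟩ := exists_zMul (κ true false) h6.1 hKadd hKneg
  -- σ ⊆ K
  have hσK : (σ : Set ℤ) ⊆ κ true false := by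
    intro s hs
    have := hκ2 true false (Set.add_mem_add h6.1 hs)
    rwa [zero_add] at this
  obtain ⟨s0, hs00, hσ⟩ := exists_zMul (σ : Set ℤ) σ.zero_mem
    (fun a b ha hb => σ.add_mem ha hb) (fun a ha => σ.neg_mem ha)
  refine ⟨hLL', hKK', hXX', hXZ, hXZ.trans hZZ', ?_⟩
  rcases eq_or_lt_of_le hM0 with hM | hM
  · -- M = 0 : K = {0}
    have hK0 : κ true false = {0} := by
      rw [hKM, ← hM]
      ext x
      constructor
      · rintro ⟨n, rfl⟩; simp
      · intro h; exact ⟨0, by simp at h; simp [h]⟩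
    have hσ0 : (σ : Set ℤ) = {0} := by
      apply Set.Subset.antisymm (hK0 ▸ hσK)
      intro x hx
      rw [Set.mem_singleton_iff] at hx
      subst hx
      exact σ.zero_mem
    have hE : (ξ true true)ᶜ ∩ {x : ℤ | 0 ≤ x} ⊆ {0} ∪ {x : ℤ | 0 < x} := by
      rintro x ⟨-, hx⟩
      rcases eq_or_lt_of_le (show 0 ≤ x from hx) with h | h
      · exact Or.inl h.symm
      · exact Or.inr h
    have hCE : (((ξ true true)ᶜ ∩ {x : ℤ | 0 ≤ x}) ∪ -((ξ true true)ᶜ ∩ {x : ℤ | 0 ≤ x}))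
        = (ξ true true)ᶜ := by
      apply Set.Subset.antisymm
      · rintro c (⟨hc, -⟩ | hc)
        · exact hc
        · have h1 := Set.mem_neg.mp hc
          have h2 := hCneg _ h1.1
          rwa [neg_neg] at h2
      · intro c hc
        by_cases h : 0 ≤ c
        · exact Or.inl ⟨hc, h⟩
        · exact Or.inr (Set.mem_neg.mpr
            ⟨hCneg _ hc, by simp only [Set.mem_setOf_eq]; omega⟩)
    have hEeq : ξ true true =
        (((ξ true true)ᶜ ∩ {x : ℤ | 0 ≤ x}) ∪ -((ξ true true)ᶜ ∩ {x : ℤ | 0 ≤ x}))ᶜ := by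
      rw [hCE, compl_compl]
    rcases Set.eq_empty_or_nonempty (κ true true) with hL | ⟨l, hl⟩
    · exact ⟨0, 1, le_refl 0, le_refl 1, ∅, _, Set.empty_subset _, hE,
        Or.inr (Or.inr (Or.inr (Or.inr ⟨hσ0, hL, hK0, hEeq⟩)))⟩
    · have hl0 : l = 0 := by
        have := hLLK _ hl _ hl
        rw [hK0, Set.mem_singleton_iff] at this
        omega
      have hLeq : κ true true = {0} := by
        apply Set.Subset.antisymm
        · intro a ha
          have := hLLK _ ha _ hl
          rw [hK0, Set.mem_singleton_iff] at this
          rw [Set.mem_singleton_iff]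
          omega
        · intro x hx
          rw [Set.mem_singleton_iff] at hx
          subst hx
          rw [← hl0]; exact hl
      exact ⟨0, 1, le_refl 0, le_refl 1, ∅, _, Set.empty_subset _, hE,
        Or.inr (Or.inr (Or.inr (Or.inl ⟨hσ0, hLeq, hK0, hEeq⟩)))⟩
  · -- 0 < M
    have hMmem : ∀ n : ℤ, M * n ∈ κ true false := by
      intro n; rw [hKM]; exact ⟨n, rfl⟩
    -- σ = u' * M
    have hs0K : s0 ∈ κ true false := hσK (by rw [hσ]; exact ⟨1, (mul_one s0).symm⟩)
    rw [hKM] at hs0K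
    obtain ⟨u', hu'⟩ := hs0K
    have hu'0 : 0 ≤ u' := by nlinarith
    have hσu : (σ : Set ℤ) = zMul (u' * M) := by
      rw [hσ]; congr 1; rw [hu']; ring
    have hCtransM : ∀ c ∈ C, ∀ n : ℤ, c + M * n ∈ C :=
      fun c hc n => hCK c hc _ (hMmem n)
    rcases Set.eq_empty_or_nonempty (κ true true) with hL | ⟨l, hl⟩
    · -- case 3
      obtain ⟨D, hD1, hD2⟩ := exists_dmSet M hM C hCtransM hCneg
      exact ⟨u', M, hu'0, hM, D, ∅, hD1, Set.empty_subset _,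
        Or.inr (Or.inr (Or.inl ⟨hσu, hL, hKM, by rw [hD2, hCdef, compl_compl]⟩))⟩
    · have h2l : l + l ∈ κ true false := hLLK _ hl _ hl
      have hldecomp := Int.emod_add_mul_ediv l M
      set r := l % M with hrdef
      set q := l / M with hqdef
      have hr0 : 0 ≤ r := Int.emod_nonneg l (by omega)
      have hrM : r < M := Int.emod_lt_of_pos l hM
      -- a ∈ κtt → a - l ∈ K
      have hsubl : ∀ a ∈ κ true true, ∃ n : ℤ, a - l = M * n := by
        intro a ha
        have : a + (-l) ∈ κ true false := hLLK _ ha _ (hLneg _ hl)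
        rw [hKM] at this
        obtain ⟨n, hn⟩ := this
        exact ⟨n, by omega⟩
      rcases eq_or_lt_of_le hr0 with hr | hr
      · -- r = 0: l ∈ K, case 1
        have hlK : l ∈ κ true false := by
          rw [hKM]
          exact ⟨q, by omega⟩
        have hLeq : κ true true = zMul M := by
          rw [← hKM]
          apply Set.Subset.antisymm
          · intro a ha
            obtain ⟨n, hn⟩ := hsubl a ha
            have : (a - l) + l ∈ κ true false := hKadd _ _ (by rw [hKM]; exact ⟨n, hn⟩) hlK
            rwa [sub_add_cancel] at this
          · intro k hk
            have hkl : k + -l ∈ κ true false := hKadd _ _ hk (hKneg _ hlK)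
            have : (k + -l) + l ∈ κ true true := hKL _ hkl _ hl
            rwa [show k + -l + l = k by ring] at this
        obtain ⟨D, hD1, hD2⟩ := exists_dmSet M hM C hCtransM hCneg
        exact ⟨u', M, hu'0, hM, D, ∅, hD1, Set.empty_subset _,
          Or.inl ⟨hσu, hLeq, hKM, by rw [hD2, hCdef, compl_compl]⟩⟩
      · -- 0 < r : M = 2r, case 2
        have h2r : r + r ∈ κ true false := by
          have h1 : (l + l) + M * (-q + -q) ∈ κ true false :=
            hKadd _ _ h2l (hMmem _)
          rwa [show (l + l) + M * (-q + -q) = r + r by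
            rw [show l = r + M * q by omega]; ring] at h1
        rw [hKM] at h2r
        obtain ⟨w, hw⟩ := h2r
        have hw1 : w = 1 := by
          have h1 : 0 < w := by nlinarith
          have h2 : w < 2 := by nlinarith
          omega
        have hM2r : M = 2 * r := by rw [hw1, mul_one] at hw; omega
        have hlq : l = r + M * q := by linarith [hldecomp]
        have hlq2r : l = r + 2 * r * q := by rw [hlq, hM2r]
        -- κ tt = zCoset r (2r)
        have hLeq : κ true true = zCoset r (2 * r) := by
          apply Set.Subset.antisymm
          · intro a ha
            obtain ⟨n, hn⟩ := hsubl a ha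
            refine ⟨q + n, ?_⟩
            rw [hM2r] at hn
            linear_combination hn + hlq2r
          · rintro x ⟨n, rfl⟩
            have hx : r + 2 * r * n = M * (n - q) + l := by
              rw [hM2r]; linear_combination -hlq2r
            rw [hx]
            exact hKL _ (hMmem _) _ hl
        have hCtransr : ∀ c ∈ C, ∀ n : ℤ, c + r * n ∈ C := by
          intro c hc n
          rcases Int.even_or_odd n with ⟨j, hj⟩ | ⟨j, hj⟩
          · have : c + r * n = c + M * j := by rw [hj, hM2r]; ring
            rw [this]
            exact hCtransM c hc j
          · have : c + r * n = (c + l) + M * (j - q) := by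
              rw [hj, hM2r, hlq2r]; ring
            rw [this]
            exact hCtransM _ (hCL _ hc _ hl) _
        obtain ⟨D, hD1, hD2⟩ := exists_dmSet r hr C hCtransr hCneg
        refine ⟨u', r, hu'0, hr, D, ∅, hD1, Set.empty_subset _,
          Or.inr (Or.inl ⟨?_, hLeq, ?_, by rw [hD2, hCdef, compl_compl]⟩)⟩
        · rw [hσu]; congr 1; rw [hM2r]; ring
        · rw [hKM, hM2r]
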